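/- Let 0 < d < s and let X, Y be independent random variables each uniformly distributed on [0,s]. If 2d ≤ s, then for every r with 0 < r < d/s the diversified position ν = (1−r)X + rY satisfies P(ν < d) ≤ P(X < d); that is, diversification does not increase the individual probability of default. (Part (i) of Proposition 1.) -/

import Mathlib

open MeasureTheory ProbabilityTheory Set

/-- The uniform probability distribution on the interval `[0, s]`. -/
noncomputable def uniformOnIcc (s : ℝ) : Measure ℝ :=
  (ENNReal.ofReal s)⁻¹ • (volume.restrict (Icc (0 : ℝ) s))

lemma uniformOnIcc_Iio (s t : ℝ) (h0 : 0 ≤ t) (hts : t ≤ s) :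
    uniformOnIcc s (Iio t) = (ENNReal.ofReal s)⁻¹ * ENNReal.ofReal t := by
  unfold uniformOnIcc
  rw [Measure.smul_apply, Measure.restrict_apply measurableSet_Iio]
  have h : Iio t ∩ Icc 0 s = Ico 0 t := by
    ext x
    constructor
    · rintro ⟨h1, h2, h3⟩; exact ⟨h2, h1⟩
    · rintro ⟨h1, h2⟩; exact ⟨h2, h1, le_trans h2.le hts⟩
  rw [h, Real.volume_Ico, smul_eq_mul, sub_zero]

lemma uniformOnIcc_finite (s : ℝ) (hs : 0 < s) : IsFiniteMeasure (uniformOnIcc s) := by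
  constructor
  unfold uniformOnIcc
  rw [Measure.smul_apply, Measure.restrict_apply_univ, Real.volume_Icc, smul_eq_mul, sub_zero]
  exact ENNReal.mul_lt_top (ENNReal.inv_lt_top.mpr (by simp [hs])) ENNReal.ofReal_lt_top

/-- if `2d ≤ s`, then for every `0 < r < d/s` the diversified position
`ν = (1-r)X + rY` satisfies `P(ν < d) ≤ P(X < d)`. (Part (i) of Proposition 1.) -/
theorem diversification_reduces_individual_default_small_r
    {Ω : Type*} [MeasurableSpace Ω] (P : Measure Ω) [IsProbabilityMeasure P]
    (s d : ℝ) (hd : 0 < d) (hds : d < s)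
    (X Y : Ω → ℝ) (hXm : Measurable X) (hYm : Measurable Y)
    (hX : P.map X = uniformOnIcc s) (hY : P.map Y = uniformOnIcc s)
    (hXY : IndepFun X Y P)
    (hs : 2 * d ≤ s)
    (r : ℝ) (hr0 : 0 < r) (hr1 : r < d / s) :
    P {ω | (1 - r) * X ω + r * Y ω < d} ≤ P {ω | X ω < d} := by
  have hs0 : 0 < s := hd.trans hds
  have hrs : r * s < d := (lt_div_iff₀ hs0).mp hr1
  have hr2 : r < 1 := by nlinarith
  have h1r : 0 < 1 - r := by linarith
  have hfin : IsFiniteMeasure (uniformOnIcc s) := uniformOnIcc_finite s hs0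
  -- the joint law of (Y, X)
  have hmap : P.map (fun ω => (Y ω, X ω)) = (uniformOnIcc s).prod (uniformOnIcc s) := by
    rw [(indepFun_iff_map_prod_eq_prod_map_map hYm.aemeasurable hXm.aemeasurable).mp hXY.symm,
      hY, hX]
  set S : Set (ℝ × ℝ) := {p | (1 - r) * p.2 + r * p.1 < d} with hS
  have hSm : MeasurableSet S :=
    measurableSet_lt (by fun_prop) measurable_const
  have hL : P {ω | (1 - r) * X ω + r * Y ω < d}
      = ((uniformOnIcc s).prod (uniformOnIcc s)) S := by
    rw [← hmap, Measure.map_apply (hYm.prodMk hXm) hSm]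
    rfl
  rw [Measure.prod_apply hSm] at hL
  -- compute each slice
  have hslice : ∀ y ∈ Icc (0:ℝ) s,
      uniformOnIcc s (Prod.mk y ⁻¹' S)
        = (ENNReal.ofReal s)⁻¹ * ENNReal.ofReal ((d - r * y) / (1 - r)) := by
    intro y hy
    have hry : r * y ≤ r * s := mul_le_mul_of_nonneg_left hy.2 hr0.le
    have hnum0 : 0 ≤ d - r * y := by nlinarith [mul_nonneg hr0.le hy.1]
    have h1 : Prod.mk y ⁻¹' S = Iio ((d - r * y) / (1 - r)) := by
      ext x
      simp only [hS, mem_preimage, mem_setOf_eq, mem_Iio]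
      rw [lt_div_iff₀ h1r]
      constructor <;> intro h <;> nlinarith
    rw [h1]
    exact uniformOnIcc_Iio s _ (div_nonneg hnum0 h1r.le)
      (by rw [div_le_iff₀ h1r]; nlinarith [mul_nonneg hr0.le hy.1])
  have hg : ∫ y in Icc (0:ℝ) s, (d - r * y) / (1 - r)
      = (d * s - r * (s ^ 2 / 2)) / (1 - r) := by
    rw [MeasureTheory.integral_Icc_eq_integral_Ioc, ← intervalIntegral.integral_of_le hs0.le]
    rw [intervalIntegral.integral_div]
    rw [intervalIntegral.integral_sub intervalIntegrable_const
      ((intervalIntegral.intervalIntegrable_id).const_mul r)]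
    rw [intervalIntegral.integral_const_mul, integral_id, intervalIntegral.integral_const]
    simp
    ring
  have hint : IntegrableOn (fun y => (d - r * y) / (1 - r)) (Icc (0:ℝ) s) volume :=
    (Continuous.integrableOn_Icc (by fun_prop))
  have hnn : 0 ≤ᵐ[volume.restrict (Icc (0:ℝ) s)] fun y => (d - r * y) / (1 - r) := by
    refine (ae_restrict_iff' measurableSet_Icc).mpr (ae_of_all _ fun y hy => ?_)
    have hry : r * y ≤ r * s := mul_le_mul_of_nonneg_left hy.2 hr0.le
    exact div_nonneg (by nlinarith) h1r.le
  have hae : ∀ᵐ y ∂(uniformOnIcc s), uniformOnIcc s (Prod.mk y ⁻¹' S)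
      = (ENNReal.ofReal s)⁻¹ * ENNReal.ofReal ((d - r * y) / (1 - r)) := by
    unfold uniformOnIcc
    refine Measure.ae_smul_measure ?_ _
    exact (ae_restrict_iff' measurableSet_Icc).mpr (ae_of_all _ hslice)
  have hLI : ∫⁻ y, uniformOnIcc s (Prod.mk y ⁻¹' S) ∂(uniformOnIcc s)
      = (ENNReal.ofReal s)⁻¹ * ((ENNReal.ofReal s)⁻¹
        * ENNReal.ofReal ((d * s - r * (s ^ 2 / 2)) / (1 - r))) := by
    rw [lintegral_congr_ae hae]
    unfold uniformOnIcc
    rw [lintegral_smul_measure, lintegral_const_mul' _ _ (by simp [hs0]),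
      ← MeasureTheory.ofReal_integral_eq_lintegral_ofReal hint hnn, hg, smul_eq_mul]
  rw [hL, hLI]
  -- the right-hand side
  have hR : P {ω | X ω < d} = (ENNReal.ofReal s)⁻¹ * ENNReal.ofReal d := by
    have h1 : {ω | X ω < d} = X ⁻¹' (Iio d) := rfl
    rw [h1, ← Measure.map_apply hXm measurableSet_Iio, hX,
      uniformOnIcc_Iio s d hd.le hds.le]
  rw [hR]
  refine mul_le_mul_right ?_ _
  have hIle : ENNReal.ofReal ((d * s - r * (s ^ 2 / 2)) / (1 - r))
      ≤ ENNReal.ofReal s * ENNReal.ofReal d := by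
    rw [← ENNReal.ofReal_mul hs0.le]
    refine ENNReal.ofReal_le_ofReal ?_
    rw [div_le_iff₀ h1r]
    nlinarith [mul_le_mul_of_nonneg_left hs (mul_nonneg hr0.le hs0.le)]
  calc (ENNReal.ofReal s)⁻¹ * ENNReal.ofReal ((d * s - r * (s ^ 2 / 2)) / (1 - r))
      ≤ (ENNReal.ofReal s)⁻¹ * (ENNReal.ofReal s * ENNReal.ofReal d) :=
        mul_le_mul_right hIle _
    _ = ENNReal.ofReal d := by
        rw [← mul_assoc, ENNReal.inv_mul_cancel (by simp [hs0]) ENNReal.ofReal_ne_top, one_mul]
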